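/- If an infinite word W : ℕ → A over a finite alphabet A satisfies T_W(n) = n + 1 for all n ≥ 1, then W is recurrent, i.e., every factor of W has infinitely many occurrences. -/

import Mathlib

/-- The factor of the infinite word `W` of length `n` occurring at position `i`. -/
def factorAt {A : Type*} (W : ℕ → A) (i n : ℕ) : List A :=
  (List.range n).map (fun j => W (i + j))

/-- `u` occurs in `W` at position `i`. -/
def occursAt {A : Type*} (W : ℕ → A) (u : List A) (i : ℕ) : Prop :=
  u = factorAt W i u.length

/-- `u` is a factor of the infinite word `W`. -/
def IsFactor {A : Type*} (W : ℕ → A) (u : List A) : Prop :=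
  ∃ i : ℕ, occursAt W u i

/-- The complexity function: the number of distinct factors of `W` of length `n`. -/
noncomputable def complexity {A : Type*} (W : ℕ → A) (n : ℕ) : ℕ :=
  Set.ncard {u : List A | u.length = n ∧ IsFactor W u}

set_option linter.unusedSectionVars false

section aux

variable {A : Type*} [Fintype A] (W : ℕ → A)

lemma factorAt_length (i n : ℕ) : (factorAt W i n).length = n := by
  simp [factorAt]

lemma factor_set_eq (n : ℕ) :
    {u : List A | u.length = n ∧ IsFactor W u} = Set.range (fun i => factorAt W i n) := by
  ext u
  constructor
  · rintro ⟨hlen, i, hi⟩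
    exact ⟨i, by rw [hi, hlen]⟩
  · rintro ⟨i, hi⟩
    have hlen : u.length = n := by rw [← hi, factorAt_length]
    exact ⟨hlen, i, by rw [occursAt, hlen]; exact hi.symm⟩

lemma factor_range_finite (n : ℕ) : (Set.range (fun i => factorAt W i n)).Finite := by
  apply Set.Finite.subset (List.finite_length_eq A n)
  rintro u ⟨i, rfl⟩
  exact factorAt_length W i n

lemma factorAt_take (i n : ℕ) : (factorAt W i (n + 1)).take n = factorAt W i n := by
  simp [factorAt, ← List.map_take, List.take_range]

lemma factorAt_succ (i n : ℕ) :
    factorAt W i (n + 1) = factorAt W i n ++ [W (i + n)] := by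
  simp [factorAt, List.range_succ]

lemma factorAt_congr {V W : ℕ → A} {i j n : ℕ} (hl : ∀ r < n, V (i + r) = W (j + r)) :
    factorAt V i n = factorAt W j n := by
  unfold factorAt
  exact List.map_congr_left fun r hr => hl r (List.mem_range.mp hr)

lemma eq_of_factorAt_eq {W : ℕ → A} {i j n : ℕ}
    (h : factorAt W i n = factorAt W j n) {r : ℕ} (hr : r < n) : W (i + r) = W (j + r) := by
  have := congrArg (fun l => l[r]?) h
  simpa [factorAt, List.getElem?_map, List.getElem?_range, hr] using this

end aux

/-- A word of complexity `n + 1` is recurrent: every factor occurs infinitely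
often. -/
theorem stmt5 {A : Type*} [Fintype A] (W : ℕ → A)
    (h : ∀ n : ℕ, 1 ≤ n → complexity W n = n + 1) :
    ∀ u : List A, IsFactor W u → {i : ℕ | occursAt W u i}.Infinite := by
  intro u hu
  by_contra hfin
  rw [Set.not_infinite] at hfin
  -- empty word occurs everywhere
  rcases Nat.eq_zero_or_pos u.length with hm0 | hm1
  · have : {i : ℕ | occursAt W u i} = Set.univ := by
      ext i
      simp only [Set.mem_setOf_eq, Set.mem_univ, iff_true, occursAt, hm0]
      simp [factorAt]
      exact List.length_eq_zero_iff.mp hm0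
    rw [this] at hfin
    exact Set.infinite_univ hfin
  -- there is a bound N beyond which u does not occur
  obtain ⟨N, hN⟩ : ∃ N, ∀ i, N ≤ i → ¬ occursAt W u i := by
    obtain ⟨N, hN⟩ := (hfin.bddAbove)
    exact ⟨N + 1, fun i hi hocc => absurd (hN hocc) (by omega)⟩
  set W' : ℕ → A := fun t => W (N + t) with hW'
  have hfac : ∀ i n, factorAt W' i n = factorAt W (N + i) n := by
    intro i n
    apply factorAt_congr
    intro r _
    simp [hW', Nat.add_assoc]
  set T : ℕ → ℕ := fun n => (Set.range (fun i => factorAt W' i n)).ncard with hT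
  set m := u.length with hm
  -- T m ≤ m
  have hTm : T m ≤ m := by
    have hsub : Set.range (fun i => factorAt W' i m) ⊆
        Set.range (fun i => factorAt W i m) \ {u} := by
      rintro v ⟨i, rfl⟩
      refine ⟨⟨N + i, (hfac i m).symm⟩, ?_⟩
      intro hv
      simp only [Set.mem_singleton_iff] at hv
      exact hN (N + i) (Nat.le_add_right N i) (by rw [occursAt, ← hm, ← hv, hfac])
    have hcard : (Set.range (fun i => factorAt W i m) \ {u}).ncard = m := by
      have humem : u ∈ Set.range (fun i => factorAt W i m) := by
        rw [← factor_set_eq]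
        exact ⟨rfl, hu⟩
      rw [Set.ncard_diff_singleton_of_mem humem]
      have := h m hm1
      rw [complexity, factor_set_eq] at this
      omega
    calc T m ≤ (Set.range (fun i => factorAt W i m) \ {u}).ncard :=
          Set.ncard_le_ncard hsub ((factor_range_finite W m).diff)
      _ = m := hcard
  have hT0 : T 0 = 1 := by
    have : Set.range (fun i => factorAt W' i 0) = {([] : List A)} := by
      ext v; simp [factorAt]
    rw [hT]; simp only [this]; exact Set.ncard_singleton _
  have hfin' : ∀ n, (Set.range (fun i => factorAt W' i n)).Finite :=
    fun n => factor_range_finite W' n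
  have himg : ∀ n, Set.range (fun i => factorAt W' i n) =
      List.take n '' Set.range (fun i => factorAt W' i (n + 1)) := by
    intro n
    ext v
    constructor
    · rintro ⟨i, rfl⟩
      exact ⟨factorAt W' i (n + 1), ⟨i, rfl⟩, factorAt_take W' i n⟩
    · rintro ⟨w, ⟨i, rfl⟩, rfl⟩
      exact ⟨i, (factorAt_take W' i n).symm⟩
  have hmono : ∀ n, T n ≤ T (n + 1) := by
    intro n
    rw [hT]
    simp only
    rw [himg n]
    exact Set.ncard_image_le (hfin' (n + 1))
  -- find a plateau
  obtain ⟨n, hnm, hplat⟩ : ∃ n, n < m ∧ T n = T (n + 1) := by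
    by_contra hc
    push_neg at hc
    have hstrict : ∀ n < m, T n < T (n + 1) := fun n hn =>
      lt_of_le_of_ne (hmono n) (hc n hn)
    have : ∀ n ≤ m, n + 1 ≤ T n := by
      intro n hn
      induction n with
      | zero => omega
      | succ k ih =>
        have := hstrict k (by omega)
        have := ih (by omega)
        omega
    have := this m le_rfl
    omega
  -- determinism
  have hinj : Set.InjOn (List.take n) (Set.range (fun i => factorAt W' i (n + 1))) := by
    apply Set.injOn_of_ncard_image_eq _ (hfin' (n + 1))
    rw [← himg n]
    exact hplat
  have hdet : ∀ i j, factorAt W' i n = factorAt W' j n → W' (i + n) = W' (j + n) := by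
    intro i j hij
    have h1 : (factorAt W' i (n + 1)).take n = (factorAt W' j (n + 1)).take n := by
      rw [factorAt_take, factorAt_take, hij]
    have h2 : factorAt W' i (n + 1) = factorAt W' j (n + 1) := hinj ⟨i, rfl⟩ ⟨j, rfl⟩ h1
    rw [factorAt_succ, factorAt_succ] at h2
    have h3 := congrArg (fun l => l.getLast?) h2
    simpa using h3
  -- pigeonhole: two equal windows
  obtain ⟨i, -, j, -, hij, heq⟩ :=
    Set.infinite_univ.exists_ne_map_eq_of_mapsTo
      (f := fun i => factorAt W' i n)
      (fun i _ => Set.mem_range_self i) (hfin' n)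
  wlog hlt : i < j generalizing i j
  · exact this j i (Ne.symm hij) heq.symm (by omega)
  set p := j - i with hp
  have hji : j = i + p := by omega
  have hp1 : 1 ≤ p := by omega
  -- all letters from position i on are p-periodic in W'
  have hper : ∀ t, W' (i + t) = W' (i + p + t) := by
    intro t
    induction t using Nat.strong_induction_on with
    | _ t ih =>
      rcases lt_or_ge t n with htn | htn
      · -- read off from window equality
        rw [hji] at heq
        exact eq_of_factorAt_eq heq htn
      · set k := t - n with hk
        have hw : factorAt W' (i + k) n = factorAt W' (i + p + k) n := by
          apply factorAt_congr
          intro r hr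
          have := ih (k + r) (by omega)
          convert this using 2 <;> omega
        have := hdet (i + k) (i + p + k) hw
        convert this using 2 <;> omega
  -- hence W is eventually periodic
  have hperW : ∀ t, N + i ≤ t → W t = W (t + p) := by
    intro t ht
    have := hper (t - N - i)
    simp only [hW'] at this
    convert this using 2 <;> omega
  -- eventually periodic words have bounded complexity
  set M := N + i + p with hM
  have hbound : ∀ s, ∃ q < M, factorAt W s (M) = factorAt W q (M) := by
    intro s
    induction s using Nat.strong_induction_on with
    | _ s ih
    =>
      rcases lt_or_ge s M with hs | hs
      · exact ⟨s, hs, rfl⟩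
      · obtain ⟨q, hq, hq2⟩ := ih (s - p) (by omega)
        refine ⟨q, hq, ?_⟩
        rw [← hq2]
        apply factorAt_congr
        intro r _
        have := hperW (s - p + r) (by omega)
        rw [this]
        congr 1
        omega
  have hsub2 : Set.range (fun q => factorAt W q M) ⊆
      (fun q => factorAt W q M) '' ↑(Finset.range M) := by
    rintro v ⟨s, rfl⟩
    obtain ⟨q, hq, hq2⟩ := hbound s
    exact ⟨q, by simpa using hq, hq2.symm⟩
  have hle : complexity W M ≤ M := by
    rw [complexity, factor_set_eq]
    calc (Set.range fun i => factorAt W i M).ncard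
        ≤ ((fun q => factorAt W q M) '' ↑(Finset.range M)).ncard :=
          Set.ncard_le_ncard hsub2 (((Finset.range M).finite_toSet).image _)
      _ ≤ (↑(Finset.range M) : Set ℕ).ncard :=
          Set.ncard_image_le (Finset.range M).finite_toSet
      _ = M := by rw [Set.ncard_coe_finset]; simp
  have := h M (by omega)
  omega
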